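/- (Corollary 2.3, rank-one case.) Let 𝕂 be an algebraically closed field of characteristic zero, and let r and s be nonzero elements of 𝕂 with rs⁻¹ not a root of unity. Then for every finite-dimensional U_{r,s}(sl_2)-module M, the 𝕂-linear operators on M given by the actions of e and of f are nilpotent. -/

import Mathlib

/-- Generators of `U_{r,s}(sl_2)`: `e`, `f`, `ω`, `ω⁻¹`, `ω′`, `ω′⁻¹`. -/
inductive UGen : Type
  | e | f | w | winv | w' | w'inv

open FreeAlgebra in
/-- The defining relations of `U_{r,s}(sl_2)`. -/
inductive URel (𝕂 : Type) [Field 𝕂] (r s : 𝕂) :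
    FreeAlgebra 𝕂 UGen → FreeAlgebra 𝕂 UGen → Prop
  | winv_right : URel 𝕂 r s (ι 𝕂 .w * ι 𝕂 .winv) 1
  | winv_left : URel 𝕂 r s (ι 𝕂 .winv * ι 𝕂 .w) 1
  | w'inv_right : URel 𝕂 r s (ι 𝕂 .w' * ι 𝕂 .w'inv) 1
  | w'inv_left : URel 𝕂 r s (ι 𝕂 .w'inv * ι 𝕂 .w') 1
  | ww' : URel 𝕂 r s (ι 𝕂 .w * ι 𝕂 .w') (ι 𝕂 .w' * ι 𝕂 .w)
  | we : URel 𝕂 r s (ι 𝕂 .w * ι 𝕂 .e) ((r * s⁻¹) • (ι 𝕂 .e * ι 𝕂 .w))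
  | wf : URel 𝕂 r s (ι 𝕂 .w * ι 𝕂 .f) ((r⁻¹ * s) • (ι 𝕂 .f * ι 𝕂 .w))
  | w'e : URel 𝕂 r s (ι 𝕂 .w' * ι 𝕂 .e) ((r⁻¹ * s) • (ι 𝕂 .e * ι 𝕂 .w'))
  | w'f : URel 𝕂 r s (ι 𝕂 .w' * ι 𝕂 .f) ((r * s⁻¹) • (ι 𝕂 .f * ι 𝕂 .w'))
  | ef : URel 𝕂 r s (ι 𝕂 .e * ι 𝕂 .f - ι 𝕂 .f * ι 𝕂 .e)
      ((r - s)⁻¹ • (ι 𝕂 .w - ι 𝕂 .w'))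

/-- The two-parameter quantum group `U_{r,s}(sl_2)`: the quotient of the free
algebra on the six generators by the defining relations. -/
abbrev Ursl2 (𝕂 : Type) [Field 𝕂] (r s : 𝕂) : Type := RingQuot (URel 𝕂 r s)

/-- The image of a generator in `U_{r,s}(sl_2)`. -/
def UGen.toU {𝕂 : Type} [Field 𝕂] (r s : 𝕂) (x : UGen) : Ursl2 𝕂 r s :=
  RingQuot.mkAlgHom 𝕂 (URel 𝕂 r s) (FreeAlgebra.ι 𝕂 x)

/-- The quantum integer `[m] = (rᵐ − sᵐ)/(r − s)`. -/
def qInt {𝕂 : Type} [Field 𝕂] (r s : 𝕂) (m : ℕ) : 𝕂 := (r ^ m - s ^ m) / (r - s)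


open Module Polynomial

lemma keyNilp {𝕂 : Type} [Field 𝕂] [IsAlgClosed 𝕂]
    {M : Type} [AddCommGroup M] [Module 𝕂 M] [FiniteDimensional 𝕂 M]
    (A W Winv : Module.End 𝕂 M) (hW : Winv * W = 1) (q : 𝕂) (hq : q ≠ 0)
    (hroot : ∀ k : ℕ, q ^ k = 1 → k = 0)
    (hcomm : W * A = q • (A * W)) : IsNilpotent A := by
  have hcomm' : A * W = q⁻¹ • (W * A) := by
    rw [hcomm, smul_smul, inv_mul_cancel₀ hq, one_smul]
  have heig : ∀ μ : 𝕂, A.HasEigenvalue μ → μ = 0 := by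
    intro μ hμ
    by_contra hμ0
    have hpump : ∀ k : ℕ, A.HasEigenvalue (q⁻¹ ^ k * μ) := by
      intro k
      induction k with
      | zero => simpa using hμ
      | succ n ih =>
        obtain ⟨v, hv⟩ := ih.exists_hasEigenvector
        refine Module.End.hasEigenvalue_of_hasEigenvector (x := W v) ⟨?_, ?_⟩
        · rw [Module.End.mem_eigenspace_iff]
          have h3 : (A * W) v = (q⁻¹ • (W * A)) v := by rw [hcomm']
          simp only [Module.End.mul_apply, LinearMap.smul_apply] at h3
          rw [h3, hv.apply_eq_smul, map_smul, smul_smul]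
          congr 1
          ring
        · intro h
          have h4 : Winv (W v) = 0 := by rw [h, map_zero]
          rw [← Module.End.mul_apply, hW, Module.End.one_apply] at h4
          exact hv.2 h4
    have key2 : ∀ a b : ℕ, a ≤ b → q ^ a = q ^ b → a = b := by
      intro a b h hab
      have h1 : q ^ (b - a) * q ^ a = 1 * q ^ a := by
        rw [← pow_add, Nat.sub_add_cancel h, one_mul, hab]
      have := hroot _ (mul_right_cancel₀ (pow_ne_zero _ hq) h1)
      omega
    have hinj : Function.Injective (fun k : ℕ => q⁻¹ ^ k * μ) := by
      intro a b hab
      simp only at hab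
      have h1 : q⁻¹ ^ a = q⁻¹ ^ b := mul_right_cancel₀ hμ0 hab
      have h2 : q ^ a = q ^ b := by
        have : (q ^ a)⁻¹ = (q ^ b)⁻¹ := by rw [← inv_pow, ← inv_pow, h1]
        exact inv_injective this
      rcases le_total a b with h | h
      · exact key2 a b h h2
      · exact (key2 b a h h2.symm).symm
    exact Set.infinite_of_injective_forall_mem hinj hpump A.finite_hasEigenvalue
  have hint : IsIntegral 𝕂 A := IsIntegral.of_finite 𝕂 A
  set p := minpoly 𝕂 A with hp
  have hmonic : p.Monic := minpoly.monic hint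
  have hsplits : p.Splits := IsAlgClosed.splits p
  have hprod : p = (p.roots.map fun a => X - C a).prod :=
    hsplits.eq_prod_roots_of_monic hmonic
  have hroots0 : ∀ a ∈ p.roots, a = 0 := by
    intro a ha
    have : A.HasEigenvalue a := by
      rw [Module.End.hasEigenvalue_iff_isRoot]
      exact isRoot_of_mem_roots ha
    exact heig a this
  have hpX : p = X ^ p.natDegree := by
    have hcard : p.roots.card = p.natDegree :=
      (Polynomial.splits_iff_card_roots).mp hsplits
    calc p = (p.roots.map fun a => X - C a).prod := hprod
    _ = (p.roots.map fun _ => (X : 𝕂[X])).prod := by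
        congr 1
        apply Multiset.map_congr rfl
        intro a ha
        rw [hroots0 a ha, map_zero, sub_zero]
    _ = X ^ p.natDegree := by
        rw [Multiset.map_const', Multiset.prod_replicate, hcard]
  refine ⟨p.natDegree, ?_⟩
  have := minpoly.aeval 𝕂 A
  rw [← hp, hpX] at this
  simpa using this

/-- Corollary 2.3 in rank one: over an algebraically closed field of characteristic
zero, if `rs⁻¹` is not a root of unity, then on every finite-dimensional
`U_{r,s}(sl_2)`-module `M` the actions of `e` and `f` are nilpotent operators. -/
theorem stmt15 {𝕂 : Type} [Field 𝕂] [IsAlgClosed 𝕂] [CharZero 𝕂]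
    (r s : 𝕂) (hr : r ≠ 0) (hs : s ≠ 0)
    (hroot : ∀ k : ℤ, (r * s⁻¹) ^ k = 1 → k = 0)
    (M : Type) [AddCommGroup M] [Module 𝕂 M] [FiniteDimensional 𝕂 M]
    (ρ : Ursl2 𝕂 r s →ₐ[𝕂] Module.End 𝕂 M) :
    IsNilpotent (ρ (UGen.toU r s .e)) ∧ IsNilpotent (ρ (UGen.toU r s .f)) := by
  set φ := ρ.comp (RingQuot.mkAlgHom 𝕂 (URel 𝕂 r s)) with hφ
  have hrel : ∀ {a b : FreeAlgebra 𝕂 UGen}, URel 𝕂 r s a b → φ a = φ b := by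
    intro a b h
    simp only [hφ, AlgHom.comp_apply, RingQuot.mkAlgHom_rel 𝕂 h]
  set E := φ (FreeAlgebra.ι 𝕂 .e) with hE
  set F := φ (FreeAlgebra.ι 𝕂 .f) with hF
  set W := φ (FreeAlgebra.ι 𝕂 .w) with hWd
  set Winv := φ (FreeAlgebra.ι 𝕂 .winv) with hWinvd
  have hEe : ρ (UGen.toU r s .e) = E := rfl
  have hFf : ρ (UGen.toU r s .f) = F := rfl
  have hWinv : Winv * W = 1 := by
    have := hrel URel.winv_left
    rwa [map_mul, map_one] at this
  have hWE : W * E = (r * s⁻¹) • (E * W) := by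
    have := hrel URel.we
    rwa [map_mul, map_smul, map_mul] at this
  have hWF : W * F = (r⁻¹ * s) • (F * W) := by
    have := hrel URel.wf
    rwa [map_mul, map_smul, map_mul] at this
  have hqe : r * s⁻¹ ≠ 0 := mul_ne_zero hr (inv_ne_zero hs)
  have hqf : r⁻¹ * s ≠ 0 := mul_ne_zero (inv_ne_zero hr) hs
  have hqinv : (r * s⁻¹)⁻¹ = r⁻¹ * s := by
    rw [mul_inv, inv_inv, mul_comm]
  have hre : ∀ k : ℕ, (r * s⁻¹) ^ k = 1 → k = 0 := by
    intro k h
    have := hroot k (by rwa [zpow_natCast])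
    exact_mod_cast this
  have hrf : ∀ k : ℕ, (r⁻¹ * s) ^ k = 1 → k = 0 := by
    intro k h
    have h2 : (r * s⁻¹) ^ k = 1 := by
      rw [← inv_eq_one, ← inv_pow, hqinv]; exact h
    exact hre k h2
  rw [hEe, hFf]
  exact ⟨keyNilp E W Winv hWinv _ hqe hre hWE,
    keyNilp F W Winv hWinv _ hqf hrf hWF⟩
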